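/- Let n ≥ 1 and 1 ≤ r ≤ n. Every eigenvector y of the Laplacian matrix L of the path P_n satisfies y_r ≠ 0 if and only if there is no odd prime p dividing n with r ≡ (p+1)/2 (mod p). Equivalently, P_n is controllable under the single leader v_r exactly when r avoids, for every odd prime factor p of n, the residue class (p+1)/2 modulo p; these are precisely the leader vertices output by Algorithm I. -/

import Mathlib

open Real

/-- The Laplacian matrix (degree matrix minus adjacency matrix) of the path graph `P_n`
on vertices `v_1, …, v_n`, where `v_i` and `v_j` are adjacent iff `|i - j| = 1`.
The vertex `v_r` corresponds to the index `⟨r - 1, _⟩ : Fin n`. -/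
def pathLap (n : ℕ) : Matrix (Fin n) (Fin n) ℝ :=
  Matrix.of fun i j =>
    if i = j then ((if (i : ℕ) = 0 then 0 else 1) + (if (i : ℕ) + 1 = n then 0 else 1))
    else if (i : ℕ) + 1 = (j : ℕ) ∨ (j : ℕ) + 1 = (i : ℕ) then -1 else 0

lemma pathLap_row (n : ℕ) (y : Fin n → ℝ) (i : Fin n) :
    (pathLap n).mulVec y i =
      ((if (i:ℕ) = 0 then 0 else 1) + (if (i:ℕ)+1 = n then 0 else 1)) * y i
      - (if h : (i:ℕ)+1 < n then y ⟨(i:ℕ)+1, h⟩ else 0)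
      - (if h : 0 < (i:ℕ) then y ⟨(i:ℕ)-1, Nat.lt_of_le_of_lt (Nat.sub_le _ _) i.isLt⟩ else 0) := by
  have key : ∀ j : Fin n, pathLap n i j * y j =
      (if j = i then ((if (i:ℕ) = 0 then 0 else 1) + (if (i:ℕ)+1 = n then 0 else 1)) * y i else 0)
      + (if (j:ℕ) = (i:ℕ)+1 then -(y j) else 0)
      + (if (j:ℕ)+1 = (i:ℕ) then -(y j) else 0) := by
    intro j
    by_cases hji : j = i
    · subst hji
      simp only [pathLap, Matrix.of_apply, if_pos rfl]
      split_ifs <;> first | omega | ring | simp_all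
    · have hij : ¬ i = j := fun h => hji h.symm
      simp only [pathLap, Matrix.of_apply, if_neg hij, if_neg hji]
      split_ifs <;>
        first | omega | ring | simp_all | (rcases ‹_ ∨ _› with h | h <;> omega)
  have S2 : (∑ j : Fin n, if (j:ℕ) = (i:ℕ)+1 then -(y j) else 0)
      = -(if h : (i:ℕ)+1 < n then y ⟨(i:ℕ)+1, h⟩ else 0) := by
    by_cases h : (i:ℕ)+1 < n
    · rw [dif_pos h, Finset.sum_eq_single (⟨(i:ℕ)+1, h⟩ : Fin n)]
      · simp
      · intro b _ hb
        exact if_neg (fun hc => hb (Fin.ext hc))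
      · simp
    · rw [dif_neg h, neg_zero]
      exact Finset.sum_eq_zero fun b _ => if_neg (fun hc => h (by have := b.isLt; omega))
  have S3 : (∑ j : Fin n, if (j:ℕ)+1 = (i:ℕ) then -(y j) else 0)
      = -(if h : 0 < (i:ℕ) then y ⟨(i:ℕ)-1, Nat.lt_of_le_of_lt (Nat.sub_le _ _) i.isLt⟩ else 0) := by
    by_cases h : 0 < (i:ℕ)
    · rw [dif_pos h, Finset.sum_eq_single (⟨(i:ℕ)-1, Nat.lt_of_le_of_lt (Nat.sub_le _ _) i.isLt⟩ : Fin n)]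
      · rw [if_pos (by simp; omega)]
      · intro b _ hb
        exact if_neg (fun hc => hb (Fin.ext (by simp; omega)))
      · simp
    · rw [dif_neg h, neg_zero]
      exact Finset.sum_eq_zero fun b _ => if_neg (by omega)
  calc (pathLap n).mulVec y i = ∑ j, pathLap n i j * y j := rfl
    _ = ∑ j : Fin n,
      ((if j = i then ((if (i:ℕ) = 0 then 0 else 1) + (if (i:ℕ)+1 = n then 0 else 1)) * y i else 0)
      + (if (j:ℕ) = (i:ℕ)+1 then -(y j) else 0)
      + (if (j:ℕ)+1 = (i:ℕ) then -(y j) else 0)) := Finset.sum_congr rfl (fun j _ => key j)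
    _ = _ := by
      rw [Finset.sum_add_distrib, Finset.sum_add_distrib, Finset.sum_ite_eq' Finset.univ i, S2, S3]
      simp only [Finset.mem_univ, if_true]
      ring


-- the key structure lemma
lemma path_formula (n : ℕ) (hn : 2 ≤ n) (lam : ℝ) (y : Fin n → ℝ)
    (heq : (pathLap n).mulVec y = lam • y)
    (f : ℕ → ℝ) (hf0 : f 0 = f 1) (hf1 : f 1 = 1)
    (hrec : ∀ j, f (j+2) = (2 - lam) * f (j+1) - f j) :
    (∀ j (h1 : 1 ≤ j) (h2 : j ≤ n), y ⟨j-1, Nat.lt_of_lt_of_le (Nat.sub_lt h1 Nat.one_pos) h2⟩ = y ⟨0, by omega⟩ * f j)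
    ∧ y ⟨0, by omega⟩ * f (n+1) = y ⟨0, by omega⟩ * f n := by
  have row : ∀ k (hk : k < n),
      ((if k = 0 then (0:ℝ) else 1) + (if k+1 = n then 0 else 1)) * y ⟨k, hk⟩
      - (if h : k+1 < n then y ⟨k+1, h⟩ else 0)
      - (if h : 0 < k then y ⟨k-1, by omega⟩ else 0) = lam * y ⟨k, hk⟩ := by
    intro k hk
    have h := pathLap_row n y ⟨k, hk⟩
    rw [heq] at h
    exact h.symm
  have main : ∀ j (h1 : 1 ≤ j) (h2 : j ≤ n), y ⟨j-1, by omega⟩ = y ⟨0, by omega⟩ * f j := by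
    intro j
    induction j using Nat.strong_induction_on with
    | _ j ih =>
      rcases j with _ | (_ | (_ | j))
      · omega
      · intro _ _
        rw [hf1, mul_one]
      · intro _ h2
        have hr := row 0 (by omega)
        rw [if_pos rfl, if_neg (by omega), dif_pos (by omega), dif_neg (by omega)] at hr
        rw [hrec 0, hf0, hf1]
        linear_combination -hr
      · intro _ h2
        have e1 : y ⟨j+1, by omega⟩ = y ⟨0, by omega⟩ * f (j+2) :=
          ih (j+2) (by omega) (by omega) (by omega)
        have e2 : y ⟨j, by omega⟩ = y ⟨0, by omega⟩ * f (j+1) :=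
          ih (j+1) (by omega) (by omega) (by omega)
        have hr := row (j+1) (by omega)
        rw [if_neg (by omega), if_neg (by omega), dif_pos (by omega), dif_pos (by omega)] at hr
        have hr' : (1+1) * y ⟨j+1, by omega⟩ - y ⟨j+2, by omega⟩ - y ⟨j, by omega⟩
            = lam * y ⟨j+1, by omega⟩ := hr
        have hrec' : f (j+3) = (2-lam) * f (j+2) - f (j+1) := hrec (j+1)
        show y ⟨j+2, by omega⟩ = y ⟨0, by omega⟩ * f (j+3)
        rw [hrec']
        linear_combination -hr' + (2-lam) * e1 - e2
  refine ⟨main, ?_⟩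
  have e1 := main n (by omega) (by omega)
  have e2 := main (n-1) (by omega) (by omega)
  have hr := row (n-1) (by omega)
  rw [if_neg (by omega), if_pos (by omega), dif_neg (by omega), dif_pos (by omega)] at hr
  have hx : n - 1 + 2 = n + 1 := by omega
  have hy' : n - 1 + 1 = n := by omega
  have hrecn := hrec (n-1)
  rw [hx, hy'] at hrecn
  rw [hrecn]
  have e2' : y ⟨n-1-1, by omega⟩ = y ⟨0, by omega⟩ * f (n-1) := e2
  linear_combination hr - (1-lam)*e1 + e2'

def fseqAux (a : ℝ) : ℕ → ℝ × ℝ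
  | 0 => (1, 1)
  | j+1 => ((fseqAux a j).2, a * (fseqAux a j).2 - (fseqAux a j).1)

def fseq (a : ℝ) (j : ℕ) : ℝ := (fseqAux a j).1

lemma fseq_zero (a : ℝ) : fseq a 0 = 1 := rfl
lemma fseq_one (a : ℝ) : fseq a 1 = 1 := rfl
lemma fseq_rec (a : ℝ) (j : ℕ) : fseq a (j+2) = a * fseq a (j+1) - fseq a j := rfl

lemma cosrec (x d : ℝ) : Real.cos (x + d) = 2 * Real.cos d * Real.cos x - Real.cos (x - d) := by
  rw [Real.cos_add, Real.cos_sub]; ring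


lemma reverse_case (n r : ℕ) (hn : 2 ≤ n) (hr1 : 1 ≤ r) (hrn : r ≤ n)
    (hco : Nat.Coprime n (2*r-1)) (lam : ℝ) (y : Fin n → ℝ) (hy : y ≠ 0)
    (heq : (pathLap n).mulVec y = lam • y) : y ⟨r-1, Nat.lt_of_lt_of_le (Nat.sub_lt hr1 Nat.one_pos) hrn⟩ ≠ 0 := by
  intro hzero
  -- y₀ ≠ 0, via the canonical recursive sequence
  obtain ⟨main0, last0⟩ := path_formula n hn lam y heq (fseq (2-lam)) rfl rfl
    (fun j => fseq_rec (2-lam) j)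
  have hy0 : y ⟨0, by omega⟩ ≠ 0 := by
    intro h0
    apply hy
    funext i
    have hform : y ⟨(i:ℕ)+1-1, by omega⟩ = y ⟨0, by omega⟩ * fseq (2-lam) ((i:ℕ)+1) :=
      main0 ((i:ℕ)+1) (by omega) (by omega)
    have : y i = y ⟨0, by omega⟩ * fseq (2-lam) ((i:ℕ)+1) := hform
    rw [this, h0, zero_mul]
    rfl
  by_cases hout : 2 < |2 - lam|
  · -- growth case: lam < 0 or lam > 4
    have grow : ∀ j, 1 ≤ |fseq (2-lam) j| ∧ |fseq (2-lam) j| ≤ |fseq (2-lam) (j+1)|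
        ∧ (1 ≤ j → |fseq (2-lam) j| < |fseq (2-lam) (j+1)|) := by
      intro j
      induction j with
      | zero => refine ⟨by norm_num [fseq, fseqAux], by norm_num [fseq, fseqAux], by omega⟩
      | succ j ih =>
        obtain ⟨ih1, ih2, _⟩ := ih
        have h1 : 1 ≤ |fseq (2-lam) (j+1)| := le_trans ih1 ih2
        have hstep : |fseq (2-lam) (j+1)| < |fseq (2-lam) (j+2)| := by
          have hr : fseq (2-lam) (j+2) = (2-lam) * fseq (2-lam) (j+1) - fseq (2-lam) j :=
            fseq_rec _ j
          have habs : |(2-lam) * fseq (2-lam) (j+1)| - |fseq (2-lam) j|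
              ≤ |fseq (2-lam) (j+2)| := by
            rw [hr]; exact abs_sub_abs_le_abs_sub _ _
          rw [abs_mul] at habs
          nlinarith [abs_nonneg (fseq (2-lam) (j+1))]
        exact ⟨h1, le_of_lt hstep, fun _ => hstep⟩
    have hne : fseq (2-lam) (n+1) ≠ fseq (2-lam) n := by
      intro hfe
      have := (grow n).2.2 (by omega)
      rw [hfe] at this
      exact lt_irrefl _ this
    exact hne (mul_left_cancel₀ hy0 last0)
  · -- now |2 - lam| ≤ 2, i.e. 0 ≤ lam ≤ 4
    push_neg at hout
    have hlam0 : 0 ≤ lam := by cases abs_le.mp hout; linarith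
    have hlam4 : lam ≤ 4 := by cases abs_le.mp hout; linarith
    by_cases h4 : lam = 4
    · -- lam = 4 case
      subst h4
      set g : ℕ → ℝ := fun j => (-1:ℝ)^(j+1) * (2*(j:ℝ)-1) with hg
      obtain ⟨maing, lastg⟩ := path_formula n hn 4 y heq g
        (by norm_num [hg]) (by norm_num [hg])
        (by
          intro j
          simp only [hg, pow_succ]
          push_cast
          ring)
      have hb : g (n+1) - g n = (-1:ℝ)^n * (4*(n:ℝ)) := by
        simp only [hg, pow_succ]
        push_cast
        ring
      have h0 : y ⟨0, by omega⟩ * ((-1:ℝ)^n * (4*(n:ℝ))) = 0 := by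
        linear_combination lastg - y ⟨0, by omega⟩ * hb
      have hne : ((-1:ℝ)^n * (4*(n:ℝ))) ≠ 0 := by
        apply mul_ne_zero
        · exact pow_ne_zero _ (by norm_num)
        · have : (0:ℝ) < (n:ℝ) := by exact_mod_cast Nat.lt_of_lt_of_le Nat.zero_lt_two hn
          positivity
      exact hy0 ((mul_eq_zero.mp h0).resolve_right hne)
    · -- main case: 0 ≤ lam < 4
      have hlam4' : lam < 4 := lt_of_le_of_ne hlam4 h4
      set θ := Real.arccos ((2-lam)/2) with hθ
      set φ := θ/2 with hφ
      have hcos : Real.cos (2*φ) = (2-lam)/2 := by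
        have : 2*φ = θ := by rw [hφ]; ring
        rw [this, hθ]
        exact Real.cos_arccos (by linarith) (by linarith)
      have hθpi : θ < π := by
        rcases lt_or_eq_of_le (Real.arccos_le_pi ((2-lam)/2)) with h | h
        · exact h
        · exfalso
          have : Real.cos θ = -1 := by rw [hθ, h]; exact Real.cos_pi
          have h2 : Real.cos θ = (2-lam)/2 := by
            rw [hθ]; exact Real.cos_arccos (by linarith) (by linarith)
          linarith [h2 ▸ this]
      have hφ0 : 0 ≤ φ := by
        rw [hφ]; have := Real.arccos_nonneg ((2-lam)/2); linarith
      have hφlt : φ < π/2 := by rw [hφ]; linarith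
      have hc : 0 < Real.cos φ :=
        Real.cos_pos_of_mem_Ioo ⟨by linarith [Real.pi_pos], hφlt⟩
      set f : ℕ → ℝ := fun j => Real.cos ((2*(j:ℝ)-1)*φ) / Real.cos φ with hf
      obtain ⟨mainf, lastf⟩ := path_formula n hn lam y heq f
        (by
          simp only [hf]
          have e0 : (2*((0:ℕ):ℝ)-1)*φ = -φ := by push_cast; ring
          have e1 : (2*((1:ℕ):ℝ)-1)*φ = φ := by push_cast; ring
          rw [e0, e1, Real.cos_neg])
        (by simp only [hf]; norm_num [div_self hc.ne'])
        (by
          intro j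
          simp only [hf]
          have e1 : (2*((j:ℕ)+2:ℝ)-1)*φ = ((2*(j:ℝ)+1)*φ) + 2*φ := by ring
          have e2 : (2*((j:ℕ)+1:ℝ)-1)*φ = (2*(j:ℝ)+1)*φ := by ring
          have e3 : (2*(j:ℝ)-1)*φ = ((2*(j:ℝ)+1)*φ) - 2*φ := by ring
          push_cast
          rw [e1, e2, e3, cosrec ((2*(j:ℝ)+1)*φ) (2*φ), hcos]
          ring)
      -- y₀ * f r = 0 hence cos((2r-1)φ) = 0
      have hfr : (0:ℝ) = y ⟨0, by omega⟩ * f r := by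
        rw [← hzero]; exact mainf r hr1 hrn
      have hA : Real.cos ((2*((n:ℝ)+1)-1)*φ) = Real.cos ((2*(n:ℝ)-1)*φ) := by
        have hfe : f (n+1) = f n := mul_left_cancel₀ hy0 lastf
        simp only [hf] at hfe
        push_cast at hfe
        have := congrArg (· * Real.cos φ) hfe
        simpa [div_mul_cancel₀, hc.ne'] using this
      have hs : Real.sin (2*(n:ℝ)*φ) * Real.sin φ = 0 := by
        have h := Real.cos_sub_cos ((2*((n:ℝ)+1)-1)*φ) ((2*(n:ℝ)-1)*φ)
        rw [hA, sub_self] at h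
        have e4 : ((2*((n:ℝ)+1)-1)*φ + (2*(n:ℝ)-1)*φ)/2 = 2*(n:ℝ)*φ := by ring
        have e5 : ((2*((n:ℝ)+1)-1)*φ - (2*(n:ℝ)-1)*φ)/2 = φ := by ring
        rw [e4, e5] at h
        linarith
      by_cases hsφ : Real.sin φ = 0
      · -- φ = 0, so lam = 0 and y is constant
        have hφz : φ = 0 := by
          rcases Real.sin_eq_zero_iff_of_lt_of_lt (by linarith [Real.pi_pos])
            (by linarith [Real.pi_pos]) |>.mp hsφ with h
          exact h
        have : f r = 1 := by
          simp only [hf, hφz, mul_zero, Real.cos_zero]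
          norm_num
        rw [this, mul_one] at hfr
        exact hy0 hfr.symm
      · have hsn : Real.sin (2*(n:ℝ)*φ) = 0 := by
          rcases mul_eq_zero.mp hs with h | h
          · exact h
          · exact absurd h hsφ
        obtain ⟨k, hk⟩ := Real.sin_eq_zero_iff.mp hsn
        -- bounds on k
        have hφpos : 0 < φ := by
          rcases lt_or_eq_of_le hφ0 with h | h
          · exact h
          · exact absurd (by rw [← h]; exact Real.sin_zero) hsφ
        have hnpos : (0:ℝ) < (n:ℝ) := by exact_mod_cast Nat.lt_of_lt_of_le Nat.zero_lt_two hn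
        have hkpos : 0 < k := by
          have : (0:ℝ) < (k:ℝ)*π := by rw [hk]; positivity
          by_contra hkn
          push_neg at hkn
          have : (k:ℝ) ≤ 0 := by exact_mod_cast hkn
          nlinarith [Real.pi_pos]
        have hkltn : (k:ℤ) < (n:ℤ) := by
          have h1 : 2*(n:ℝ)*φ < (n:ℝ)*π := by nlinarith
          have h2 : (k:ℝ)*π < (n:ℝ)*π := by rw [hk]; exact h1
          have h3 : (k:ℝ) < (n:ℝ) := by nlinarith [Real.pi_pos]
          exact_mod_cast h3
        -- cos((2r-1)φ) = 0
        have hcr : Real.cos ((2*(r:ℝ)-1)*φ) = 0 := by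
          have : f r = 0 := by
            rcases mul_eq_zero.mp hfr.symm with h | h
            · exact absurd h hy0
            · exact h
          simp only [hf] at this
          rcases div_eq_zero_iff.mp this with h | h
          · exact h
          · exact absurd h hc.ne'
        obtain ⟨m, hm⟩ := Real.cos_eq_zero_iff.mp hcr
        -- derive the integer equation
        have hZR : (2*(r:ℝ)-1)*(k:ℝ) = (2*(m:ℝ)+1)*(n:ℝ) := by
          have h1 : (2*(r:ℝ)-1)*(2*(n:ℝ)*φ) = (2*(r:ℝ)-1)*((k:ℝ)*π) := by rw [hk]
          have h2 : (2*(r:ℝ)-1)*(2*(n:ℝ)*φ) = (2*(m:ℝ)+1)*π*(n:ℝ) := by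
            rw [show (2*(r:ℝ)-1)*(2*(n:ℝ)*φ) = ((2*(r:ℝ)-1)*φ)*(2*(n:ℝ)) by ring, hm]
            ring
          have hπ := Real.pi_ne_zero
          have : (2*(r:ℝ)-1)*(k:ℝ)*π = (2*(m:ℝ)+1)*(n:ℝ)*π := by linarith [h1, h2]
          exact mul_right_cancel₀ hπ this
        have hZ : (2*(r:ℤ)-1)*k = (2*m+1)*(n:ℤ) := by exact_mod_cast hZR
        have hmpos : 0 ≤ m := by
          by_contra hmn
          push_neg at hmn
          have h1 : (2*(r:ℤ)-1) ≥ 1 := by omega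
          have h2 : 2*m+1 ≤ -1 := by omega
          have hnz : (0:ℤ) < (n:ℤ) := by exact_mod_cast (show 0 < n by omega)
          have p1 : (0:ℤ) < (2*(r:ℤ)-1)*k := mul_pos (by omega) hkpos
          have p2 : (2*m+1)*(n:ℤ) ≤ -1*(n:ℤ) := mul_le_mul_of_nonneg_right h2 (le_of_lt hnz)
          linarith [hZ, p1, p2, hnz]
        -- to naturals
        have EN : (2*r-1)*(k.toNat) = (2*(m.toNat)+1)*n := by
          have : (((2*r-1)*(k.toNat) : ℕ) : ℤ) = (((2*(m.toNat)+1)*n : ℕ) : ℤ) := by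
            push_cast [Int.toNat_of_nonneg (le_of_lt hkpos), Int.toNat_of_nonneg hmpos,
              Nat.cast_sub (show 1 ≤ 2*r by omega)]
            linear_combination hZ
          exact_mod_cast this
        have hdvd : n ∣ (2*r-1) * (k.toNat) := ⟨2*(m.toNat)+1, by rw [EN, Nat.mul_comm]⟩
        have hdk : n ∣ k.toNat := Nat.Coprime.dvd_of_dvd_mul_left hco hdvd
        have hk1 : 1 ≤ k.toNat := by omega
        have hkn2 : k.toNat < n := by omega
        have := Nat.le_of_dvd (by omega) hdk
        omega


lemma coprime_of_no_prime (n r : ℕ) (hn : 1 ≤ n) (hr1 : 1 ≤ r)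
    (h : ¬ ∃ p : ℕ, p.Prime ∧ Odd p ∧ p ∣ n ∧ r ≡ (p + 1) / 2 [MOD p]) :
    Nat.Coprime n (2*r-1) := by
  by_contra hc
  obtain ⟨p, hp, hpg⟩ := Nat.exists_prime_and_dvd (fun h1 : Nat.gcd n (2*r-1) = 1 => hc h1)
  have hpn : p ∣ n := hpg.trans (Nat.gcd_dvd_left _ _)
  have hpm : p ∣ 2*r-1 := hpg.trans (Nat.gcd_dvd_right _ _)
  have hodd : Odd p := by
    rcases hp.eq_two_or_odd' with h2 | h2
    · subst h2
      obtain ⟨t, ht⟩ := hpm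
      omega
    · exact h2
  apply h
  refine ⟨p, hp, hodd, hpn, ?_⟩
  -- p ∣ 2r - 1  ⇒ 1 ≡ 2r [MOD p] ⇒ 2*((p+1)/2) = p+1 ≡ 1 ≡ 2r ⇒ r ≡ (p+1)/2
  have h1 : (1:ℕ) ≡ 2*r [MOD p] := (Nat.modEq_iff_dvd' (by omega)).mpr hpm
  have hp2 : 2*((p+1)/2) = p+1 := by
    obtain ⟨t, ht⟩ := hodd
    omega
  have h2 : (p+1:ℕ) ≡ 1 [MOD p] := by
    have : (p:ℕ) ≡ 0 [MOD p] := (Nat.modEq_zero_iff_dvd).mpr dvd_rfl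
    simpa using this.add_right 1
  have h3 : 2*((p+1)/2) ≡ 2*r [MOD p] := by
    rw [hp2]
    exact h2.trans h1
  have hgcd : p.gcd 2 = 1 := by
    have h2p : Nat.Coprime 2 p := (Nat.prime_two.coprime_iff_not_dvd).mpr (by
      intro hdvd
      rcases hodd with ⟨t, ht⟩
      omega)
    exact h2p.symm
  exact (Nat.ModEq.cancel_left_of_coprime hgcd h3).symm
lemma dvd_two_r_sub_one (p r : ℕ) (hp : p.Prime) (hodd : Odd p) (hr1 : 1 ≤ r)
    (hmod : r ≡ (p + 1) / 2 [MOD p]) : p ∣ 2*r-1 := by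
  have hp2 : 2*((p+1)/2) = p+1 := by obtain ⟨t, ht⟩ := hodd; omega
  have h1 : 2*r ≡ 2*((p+1)/2) [MOD p] := hmod.mul_left 2
  have h2 : (p+1:ℕ) ≡ 1 [MOD p] := by
    have : (p:ℕ) ≡ 0 [MOD p] := (Nat.modEq_zero_iff_dvd).mpr dvd_rfl
    simpa using this.add_right 1
  have h3 : 2*r ≡ 1 [MOD p] := by
    rw [hp2] at h1
    exact h1.trans h2
  exact (Nat.modEq_iff_dvd' (show 1 ≤ 2*r by omega)).mp h3.symm

lemma forward_eig (n p : ℕ) (hp3 : 3 ≤ p) (hpn : p ∣ n) (hn : 2 ≤ n) :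
    (pathLap n).mulVec (fun j : Fin n => Real.cos ((2*(j:ℝ)+1) * (π/(2*p))))
      = (2 - 2*Real.cos (2*(π/(2*p)))) •
        (fun j : Fin n => Real.cos ((2*(j:ℝ)+1) * (π/(2*p)))) := by
  obtain ⟨s, hs⟩ := hpn
  have hppos : (0:ℝ) < (p:ℝ) := by exact_mod_cast (by omega : 0 < p)
  set u := π/(2*(p:ℝ)) with hu
  set lam := 2 - 2*Real.cos (2*u) with hlam
  funext i
  rw [pathLap_row]
  simp only [Pi.smul_apply, smul_eq_mul]
  by_cases h0 : (i:ℕ) = 0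
  · -- first row; note n ≥ 2 so i+1 = n is false when i = 0... n could be 2? n ≥ p ≥ 3? n = p*s ≥ 3
    have hn3 : 3 ≤ n := le_trans hp3 (Nat.le_of_dvd (by omega) ⟨s, hs⟩)
    rw [if_pos h0, if_neg (by omega), dif_pos (by omega), dif_neg (by omega)]
    have hi : ((i:ℕ):ℝ) = 0 := by exact_mod_cast h0
    have e1 : (2*((((i:ℕ)+1 : ℕ)):ℝ)+1)*u = (2*((i:ℕ):ℝ)+1)*u + 2*u := by push_cast; ring
    have e2 : ((2*((i:ℕ):ℝ)+1)*u) - 2*u = -((2*((i:ℕ):ℝ)+1)*u) + 2*(((i:ℕ):ℝ))*u + 0 := by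
      rw [hi]; ring
    rw [e1, cosrec]
    rw [show (2*((i:ℕ):ℝ)+1)*u - 2*u = -((2*((i:ℕ):ℝ)+1)*u) from by rw [hi]; ring]
    rw [Real.cos_neg]
    ring
  · by_cases hlast : (i:ℕ)+1 = n
    · -- last row
      rw [if_neg h0, if_pos hlast, dif_neg (by omega), dif_pos (by omega)]
      have hi : ((i:ℕ):ℝ) = (n:ℝ) - 1 := by
        have : ((i:ℕ):ℝ) + 1 = (n:ℝ) := by exact_mod_cast hlast
        linarith
      have e3 : (2*((((i:ℕ)-1 : ℕ)):ℝ)+1)*u = (2*((i:ℕ):ℝ)+1)*u - 2*u := by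
        push_cast [Nat.cast_sub (show 1 ≤ (i:ℕ) by omega)]
        ring
      -- key : cos(x + 2u) = cos(x - 2u) where x = (2n-1)u
      have hsπ : (2*((i:ℕ):ℝ)+1)*u + 2*u = s*π + u := by
        rw [hi]
        have hns : (n:ℝ) = (p:ℝ)*(s:ℝ) := by exact_mod_cast hs
        rw [hns, hu]
        field_simp
        ring
      have hsπ' : (2*((i:ℕ):ℝ)+1)*u = s*π - u := by
        have : (2*((i:ℕ):ℝ)+1)*u = (s*π + u) - 2*u := by rw [← hsπ]; ring
        rw [this]; ring
      have hcs : Real.cos ((2*((i:ℕ):ℝ)+1)*u + 2*u) = Real.cos ((2*((i:ℕ):ℝ)+1)*u) := by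
        rw [hsπ, hsπ', Real.cos_add, Real.cos_sub, Real.sin_nat_mul_pi]
        ring
      have := cosrec ((2*((i:ℕ):ℝ)+1)*u) (2*u)
      rw [hcs] at this
      rw [e3, hlam]
      linear_combination -this
    · -- interior row
      rw [if_neg h0, if_neg hlast, dif_pos (by omega), dif_pos (by omega)]
      have e1 : (2*((((i:ℕ)+1 : ℕ)):ℝ)+1)*u = (2*((i:ℕ):ℝ)+1)*u + 2*u := by push_cast; ring
      have e3 : (2*((((i:ℕ)-1 : ℕ)):ℝ)+1)*u = (2*((i:ℕ):ℝ)+1)*u - 2*u := by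
        push_cast [Nat.cast_sub (show 1 ≤ (i:ℕ) by omega)]
        ring
      rw [e1, e3, cosrec ((2*((i:ℕ):ℝ)+1)*u) (2*u)]
      ring


/-- For `1 ≤ r ≤ n`, every eigenvector `y` of the Laplacian of the path `P_n` has a
nonzero `r`-th entry (equivalently, `P_n` is controllable under the single leader `v_r`)
iff there is no odd prime `p` dividing `n` with `r ≡ (p+1)/2 (mod p)`. -/
theorem path_single_leader_controllable_iff (n r : ℕ) (hn : 1 ≤ n)
    (hr1 : 1 ≤ r) (hrn : r ≤ n) :
    (∀ (lam : ℝ) (y : Fin n → ℝ), y ≠ 0 → (pathLap n).mulVec y = lam • y →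
        y ⟨r - 1, by omega⟩ ≠ 0) ↔
      ¬ ∃ p : ℕ, p.Prime ∧ Odd p ∧ p ∣ n ∧ r ≡ (p + 1) / 2 [MOD p] := by
  constructor
  · -- controllable → no bad prime
    intro hL
    rintro ⟨p, hp, hodd, hpn, hmod⟩
    have hp3 : 3 ≤ p := by
      rcases hodd with ⟨t, ht⟩
      have := hp.two_le
      omega
    have hn3 : 3 ≤ n := le_trans hp3 (Nat.le_of_dvd (by omega) hpn)
    have hppos : (0:ℝ) < (p:ℝ) := by exact_mod_cast (by omega : 0 < p)
    set u := π/(2*(p:ℝ)) with hu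
    have heig := forward_eig n p hp3 hpn (by omega)
    set y : Fin n → ℝ := fun j : Fin n => Real.cos ((2*(j:ℝ)+1) * u) with hy
    have hupos : 0 < u := by rw [hu]; positivity
    have hult : u < π/2 := by
      have hp2 : (2:ℝ) < 2*(p:ℝ) := by
        have : (3:ℝ) ≤ (p:ℝ) := by exact_mod_cast hp3
        linarith
      rw [hu, div_lt_div_iff₀ (by positivity) (by norm_num)]
      exact mul_lt_mul_of_pos_left hp2 Real.pi_pos
    have hyne : y ≠ 0 := by
      intro h
      have h0 : y ⟨0, by omega⟩ = 0 := by rw [h]; rfl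
      have : Real.cos ((2*(((0:ℕ)):ℝ)+1) * u) = 0 := h0
      rw [show (2*(((0:ℕ)):ℝ)+1) * u = u by push_cast; ring] at this
      have := Real.cos_pos_of_mem_Ioo ⟨by linarith [Real.pi_pos], hult⟩
      linarith
    have hLr := hL (2 - 2*Real.cos (2*u)) y hyne heig
    apply hLr
    -- show y ⟨r-1⟩ = 0
    obtain ⟨q, hq⟩ := dvd_two_r_sub_one p r hp hodd hr1 hmod
    have hoddq : Odd q := by
      have h1 : Odd (2*r-1) := Nat.odd_iff.mpr (by omega)
      rw [hq] at h1
      exact (Nat.odd_mul.mp h1).2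
    obtain ⟨t, ht⟩ := hoddq
    have harg : (2*(((r-1:ℕ)):ℝ)+1) * u = (2*(t:ℝ)+1)*π/2 := by
      rw [ht] at hq
      have hnat : 2*(r-1)+1 = p*(2*t+1) := by rw [← hq]; omega
      have hcast : (2*(((r-1:ℕ)):ℝ)+1) = (p:ℝ)*(2*(t:ℝ)+1) := by exact_mod_cast hnat
      rw [hcast, hu]
      field_simp
    show Real.cos ((2*(((r-1:ℕ)):ℝ)+1) * u) = 0
    rw [harg]
    exact Real.cos_eq_zero_iff.mpr ⟨t, by push_cast; ring⟩
  · -- no bad prime → controllable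
    intro hno lam y hy heq
    rcases Nat.lt_or_ge n 2 with h2 | h2
    · -- n = 1
      intro h
      apply hy
      funext i
      have hi : i = ⟨r-1, by omega⟩ := Fin.ext (by have := i.isLt; omega)
      rw [hi, h]
      rfl
    · exact reverse_case n r h2 hr1 hrn (coprime_of_no_prime n r hn hr1 hno) lam y hy heq
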